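/- If p : X → Y and q : Y → Z are maps of simplicial sets such that p is a surjective Kan fibration and q∘p is a Kan fibration, then q is a Kan fibration. -/

import Mathlib

open CategoryTheory SSet

/-- A map of simplicial sets is a *Kan fibration* if it has the right lifting
property with respect to all horn inclusions `Λ[n, i] ⟶ Δ[n]` (`n ≥ 1`). -/
def IsKanFibration {X Y : SSet} (f : X ⟶ Y) : Prop :=
  ∀ (n : ℕ) (i : Fin (n + 2)), HasLiftingProperty (horn (n + 1) i).ι f

/-!
STATEMENT 5: If `p : X → Y` and `q : Y → Z` are maps of simplicial sets such
that `p` is a surjective Kan fibration and `q ∘ p` is a Kan fibration, then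
`q` is a Kan fibration.  (Surjective means levelwise surjective.)
-/

namespace KanCancellation

open Simplicial SimplexCategory Opposite Finset

universe u

/-- The generalized horn: the union of the faces `δ j` of `Δ[n]` for `j ∈ T`. -/
def ghorn (n : ℕ) (T : Finset (Fin (n + 1))) : SSet.{u} where
  obj m := { α : Δ[n].obj m // ∃ j ∈ T, ∀ k, α.down.toOrderHom k ≠ j }
  map {m₁ m₂} f := TypeCat.ofHom fun α =>
    ⟨Δ[n].map f α.1, by
      obtain ⟨j, hjT, hj⟩ := α.2
      exact ⟨j, hjT, fun k => hj _⟩⟩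

/-- Inclusion of the generalized horn into the simplex. -/
def ghornι (n : ℕ) (T : Finset (Fin (n + 1))) : ghorn.{u} n T ⟶ Δ[n] where
  app m := TypeCat.ofHom fun α => α.1

/-- Inclusion between generalized horns. -/
def ghornMap (n : ℕ) {T T' : Finset (Fin (n + 1))} (h : T ⊆ T') :
    ghorn.{u} n T ⟶ ghorn.{u} n T' where
  app m := TypeCat.ofHom fun α => ⟨α.1, by obtain ⟨j, hjT, hj⟩ := α.2; exact ⟨j, h hjT, hj⟩⟩


/-- The face map `Δ[n] ⟶ ghorn (n+1) T` for `j ∈ T`. -/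
def gfaceHom {n : ℕ} (T : Finset (Fin (n + 2))) (j : Fin (n + 2)) (hj : j ∈ T) :
    Δ[n] ⟶ ghorn.{u} (n + 1) T where
  app m := TypeCat.ofHom fun α => ⟨(SSet.stdSimplex.map (δ j)).app m α, by
    refine ⟨j, hj, fun k => ?_⟩
    exact Fin.succAbove_ne j _⟩

/-- The map `ghorn n T' ⟶ ghorn (n+1) T` induced by `δ j₀`, where
`T' = succAbove j₀ ⁻¹ T`. -/
def gres {n : ℕ} (T : Finset (Fin (n + 2))) (j₀ : Fin (n + 2)) :
    ghorn.{u} n (Finset.univ.filter fun s => j₀.succAbove s ∈ T) ⟶ ghorn.{u} (n + 1) T where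
  app m := TypeCat.ofHom fun α => ⟨(SSet.stdSimplex.map (δ j₀)).app m α.1, by
    obtain ⟨s, hsT, hs⟩ := α.2
    simp only [Finset.mem_filter, Finset.mem_univ, true_and] at hsT
    refine ⟨j₀.succAbove s, hsT, fun k => ?_⟩
    intro h
    exact hs k (Fin.succAbove_right_injective h)⟩

lemma gfaceHom_ι {n : ℕ} (T : Finset (Fin (n + 2))) (j : Fin (n + 2)) (hj : j ∈ T) :
    gfaceHom.{u} T j hj ≫ ghornι (n + 1) T = SSet.stdSimplex.map (δ j) := rfl

lemma ghornMap_ι (n : ℕ) {T T' : Finset (Fin (n + 1))} (h : T ⊆ T') :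
    ghornMap.{u} n h ≫ ghornι n T' = ghornι n T := rfl

lemma gfaceHom_ghornMap {n : ℕ} {T T' : Finset (Fin (n + 2))} (h : T ⊆ T')
    (j : Fin (n + 2)) (hj : j ∈ T) :
    gfaceHom.{u} T j hj ≫ ghornMap (n + 1) h = gfaceHom T' j (h hj) := rfl

lemma gres_ι {n : ℕ} (T : Finset (Fin (n + 2))) (j₀ : Fin (n + 2)) :
    gres.{u} T j₀ ≫ ghornι (n + 1) T =
      ghornι n (Finset.univ.filter fun s => j₀.succAbove s ∈ T) ≫
        SSet.stdSimplex.map (δ j₀) := rfl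

lemma gres_ghornMap {n : ℕ} {T T' : Finset (Fin (n + 2))} (h : T ⊆ T') (j₀ : Fin (n + 2))
    (hfil : (Finset.univ.filter fun s => j₀.succAbove s ∈ T) ⊆
      (Finset.univ.filter fun s => j₀.succAbove s ∈ T')) :
    gres.{u} T j₀ ≫ ghornMap (n + 1) h =
      ghornMap n hfil ≫ gres T' j₀ := rfl


/-- Factor a map missing `j` through the face `δ j`. -/
def gfactor {x : SimplexCategory} {n : ℕ} (f : x ⟶ ⦋n + 1⦌) (j : Fin (n + 2)) :
    x ⟶ ⦋n⦌ :=
  f ≫ σ (Fin.predAbove 0 j)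

lemma gfactor_spec {x : SimplexCategory} {n : ℕ} (f : x ⟶ ⦋n + 1⦌) (j : Fin (n + 2))
    (hj : ∀ k, f.toOrderHom k ≠ j) : gfactor f j ≫ δ j = f := by
  induction x using SimplexCategory.rec with
  | _ m => exact factor_δ_spec f j hj

lemma gfactor_unique {x : SimplexCategory} {n : ℕ} {f : x ⟶ ⦋n + 1⦌} {j : Fin (n + 2)}
    (hj : ∀ k, f.toOrderHom k ≠ j) {β : x ⟶ ⦋n⦌} (hβ : β ≫ δ j = f) :
    β = gfactor f j := by
  rw [← cancel_mono (δ j), hβ, gfactor_spec f j hj]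

lemma ghorn_empty_ext {n : ℕ} {W : SSet.{u}} (σ₁ σ₂ : ghorn.{u} n ∅ ⟶ W) : σ₁ = σ₂ := by
  apply NatTrans.ext
  funext m; apply ConcreteCategory.hom_ext; intro α
  obtain ⟨j, hj, -⟩ := α.2
  simp at hj


lemma gfaceHom_app_id {n : ℕ} (T : Finset (Fin (n + 2))) (j : Fin (n + 2)) (hj : j ∈ T) :
    ((gfaceHom.{u} T j hj).app (op (SimplexCategory.mk n))
        (stdSimplex.objEquiv.symm (𝟙 (SimplexCategory.mk n)))).1 =
      stdSimplex.objEquiv.symm (δ j) := by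
  apply stdSimplex.objEquiv.injective
  show (𝟙 (SimplexCategory.mk n)) ≫ δ j = δ j
  simp

lemma ghorn_hom_ext {n : ℕ} {T : Finset (Fin (n + 2))} {W : SSet.{u}}
    (σ₁ σ₂ : ghorn.{u} (n + 1) T ⟶ W)
    (h : ∀ (j : Fin (n + 2)) (hj : j ∈ T),
      gfaceHom T j hj ≫ σ₁ = gfaceHom T j hj ≫ σ₂) : σ₁ = σ₂ := by
  apply NatTrans.ext; apply funext; apply Opposite.rec; apply SimplexCategory.rec
  intro m; apply ConcreteCategory.hom_ext; rintro ⟨f, hf⟩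
  obtain ⟨j, hjT, hj⟩ := hf
  have hface : ∀ (τ : ghorn.{u} (n + 1) T ⟶ W),
      τ.app (op (SimplexCategory.mk n)) ⟨stdSimplex.objEquiv.symm (δ j), j, hjT,
        fun k => Fin.succAbove_ne j k⟩ =
      (gfaceHom T j hjT ≫ τ).app (op (SimplexCategory.mk n))
        (stdSimplex.objEquiv.symm (𝟙 (SimplexCategory.mk n))) := by
    intro τ
    show _ = τ.app _ ((gfaceHom T j hjT).app _ _)
    exact congrArg (τ.app _) (Subtype.ext (gfaceHom_app_id T j hjT).symm)
  have hfact : (⟨f, j, hjT, hj⟩ : (ghorn.{u} (n + 1) T).obj (op (SimplexCategory.mk m))) =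
      (ghorn.{u} (n + 1) T).map (gfactor f.down j).op
        ⟨stdSimplex.objEquiv.symm (δ j), j, hjT,
          fun k => Fin.succAbove_ne j k⟩ := by
    apply Subtype.ext
    apply stdSimplex.objEquiv.injective
    show f.down = gfactor f.down j ≫ δ j
    exact (gfactor_spec f.down j hj).symm
  have H₁ := ConcreteCategory.congr_hom (σ₁.naturality (gfactor f.down j).op)
  have H₂ := ConcreteCategory.congr_hom (σ₂.naturality (gfactor f.down j).op)
  rw [hfact]
  refine (H₁ _).trans (Eq.trans ?_ (H₂ _).symm)
  show W.map _ (σ₁.app _ _) = W.map _ (σ₂.app _ _)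
  rw [hface σ₁, hface σ₂, h j hjT]


/-- The preimage of the face set under `succAbove j₀`. -/
abbrev preT {n : ℕ} (T : Finset (Fin (n + 2))) (j₀ : Fin (n + 2)) : Finset (Fin (n + 1)) :=
  Finset.univ.filter fun s => j₀.succAbove s ∈ T

section Glue

variable {n : ℕ} {T : Finset (Fin (n + 2))} {j₀ : Fin (n + 2)} {W : SSet.{u}}

lemma glue_wp (hj₀ : j₀ ∉ T) (ℓ : ghorn.{u} (n + 1) T ⟶ W) (h₁ : Δ[n] ⟶ W)
    (hcomp : gres T j₀ ≫ ℓ = ghornι n (preT T j₀) ≫ h₁)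
    (m : SimplexCategoryᵒᵖ) (x : Δ[n + 1].obj m)
    (h : ∃ j ∈ T, ∀ k, x.down.toOrderHom k ≠ j)
    (h0 : ∀ k, x.down.toOrderHom k ≠ j₀) :
    ℓ.app m ⟨x, h⟩ =
      h₁.app m (stdSimplex.objEquiv.symm (gfactor x.down j₀)) := by
  obtain ⟨j, hjT, hj⟩ := h
  have hjne : j ≠ j₀ := fun e => hj₀ (e ▸ hjT)
  obtain ⟨s, hs⟩ := Fin.exists_succAbove_eq hjne
  have hspec : gfactor x.down j₀ ≫ δ j₀ = x.down := gfactor_spec _ _ h0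
  have hβmiss : ∀ k, (gfactor x.down j₀).toOrderHom k ≠ s := by
    intro k hk
    apply hj k
    have h1 : (gfactor x.down j₀ ≫ δ j₀).toOrderHom k = x.down.toOrderHom k := by
      rw [hspec]
    rw [← h1]
    show j₀.succAbove ((gfactor x.down j₀).toOrderHom k) = j
    rw [hk, hs]
  have hsT : s ∈ preT T j₀ := by
    simp only [Finset.mem_filter, Finset.mem_univ, true_and, hs]
    exact hjT
  set B : (ghorn.{u} n (preT T j₀)).obj m :=
    ⟨stdSimplex.objEquiv.symm (gfactor x.down j₀), s, hsT, hβmiss⟩ with hB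
  have key := ConcreteCategory.congr_hom (NatTrans.congr_app hcomp m) B
  have hgres : (gres.{u} T j₀).app m B = ⟨x, j, hjT, hj⟩ := by
    apply Subtype.ext
    show (SSet.stdSimplex.map (δ j₀)).app m
      (stdSimplex.objEquiv.symm (gfactor x.down j₀)) = x
    apply stdSimplex.objEquiv.injective
    show gfactor x.down j₀ ≫ δ j₀ = x.down
    exact hspec
  calc ℓ.app m ⟨x, j, hjT, hj⟩ = ℓ.app m ((gres.{u} T j₀).app m B) := by rw [hgres]
    _ = (gres T j₀ ≫ ℓ).app m B := rfl
    _ = (ghornι n (preT T j₀) ≫ h₁).app m B := by rw [hcomp]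
    _ = h₁.app m (stdSimplex.objEquiv.symm (gfactor x.down j₀)) := rfl


lemma glue (hj₀ : j₀ ∉ T) (ℓ : ghorn.{u} (n + 1) T ⟶ W) (h₁ : Δ[n] ⟶ W)
    (hcomp : gres T j₀ ≫ ℓ = ghornι n (preT T j₀) ≫ h₁) :
    ∃ ℓ' : ghorn.{u} (n + 1) (insert j₀ T) ⟶ W,
      ghornMap (n + 1) (Finset.subset_insert j₀ T) ≫ ℓ' = ℓ ∧
      gfaceHom (insert j₀ T) j₀ (Finset.mem_insert_self j₀ T) ≫ ℓ' = h₁ := by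
  classical
  have F1 : ∀ (m : SimplexCategoryᵒᵖ) (α : (ghorn.{u} (n + 1) (insert j₀ T)).obj m),
      ¬(∃ j ∈ T, ∀ k, α.1.down.toOrderHom k ≠ j) → ∀ k, α.1.down.toOrderHom k ≠ j₀ := by
    intro m α hcon
    obtain ⟨j, hj, hmiss⟩ := α.2
    rcases Finset.mem_insert.mp hj with rfl | hjT
    · exact hmiss
    · exact absurd ⟨j, hjT, hmiss⟩ hcon
  refine ⟨⟨fun m => TypeCat.ofHom fun α =>
      if h : (∃ j ∈ T, ∀ k, α.1.down.toOrderHom k ≠ j) then ℓ.app m ⟨α.1, h⟩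
      else h₁.app m (stdSimplex.objEquiv.symm (gfactor α.1.down j₀)), ?_⟩, ?_, ?_⟩
  · intro m m' φ
    apply ConcreteCategory.hom_ext; intro α
    dsimp only [types_comp_apply, TypeCat.ofHom_apply]
    by_cases h : ∃ j ∈ T, ∀ k, α.1.down.toOrderHom k ≠ j
    · have h' : ∃ j ∈ T, ∀ k,
          (((ghorn.{u} (n + 1) (insert j₀ T)).map φ α).1).down.toOrderHom k ≠ j := by
        obtain ⟨j, hjT, hj⟩ := h
        exact ⟨j, hjT, fun k => hj _⟩
      rw [dif_pos h, dif_pos h']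
      have := ConcreteCategory.congr_hom (ℓ.naturality φ) ⟨α.1, h⟩
      dsimp only [types_comp_apply] at this
      refine Eq.trans ?_ this
      rfl
    · have h0 : ∀ k, α.1.down.toOrderHom k ≠ j₀ := F1 m α h
      have hnat := ConcreteCategory.congr_hom (h₁.naturality φ)
        (stdSimplex.objEquiv.symm (gfactor α.1.down j₀))
      dsimp only [types_comp_apply] at hnat
      have hmapped : (Δ[n].map φ (stdSimplex.objEquiv.symm
          (gfactor α.1.down j₀))) = stdSimplex.objEquiv.symm
          (gfactor (((ghorn.{u} (n + 1) (insert j₀ T)).map φ α).1).down j₀) := rfl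
      by_cases h' : ∃ j ∈ T, ∀ k,
          (((ghorn.{u} (n + 1) (insert j₀ T)).map φ α).1).down.toOrderHom k ≠ j
      · rw [dif_pos h', dif_neg h]
        rw [glue_wp hj₀ ℓ h₁ hcomp m' _ h' (fun k => h0 _)]
        rw [← hnat, hmapped]
      · rw [dif_neg h', dif_neg h, ← hnat, hmapped]
  · apply NatTrans.ext
    funext m; apply ConcreteCategory.hom_ext; intro α
    have h : ∃ j ∈ T, ∀ k, α.1.down.toOrderHom k ≠ j := α.2
    exact (dif_pos h).trans (congrArg (ℓ.app m) (Subtype.ext rfl))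
  · apply NatTrans.ext
    funext m; apply ConcreteCategory.hom_ext; intro y
    have h0 : ∀ k, ((SSet.stdSimplex.map (δ j₀)).app m y).down.toOrderHom k ≠ j₀ :=
      fun k => Fin.succAbove_ne j₀ _
    have hfac : gfactor ((SSet.stdSimplex.map (δ j₀)).app m y).down j₀ = y.down := by
      refine (gfactor_unique h0 ?_).symm
      rfl
    have hval : h₁.app m (stdSimplex.objEquiv.symm
        (gfactor ((SSet.stdSimplex.map (δ j₀)).app m y).down j₀)) = h₁.app m y := by
      rw [hfac]
      exact congrArg _ (Equiv.symm_apply_apply _ y)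
    by_cases h : ∃ j ∈ T, ∀ k,
        ((SSet.stdSimplex.map (δ j₀)).app m y).down.toOrderHom k ≠ j
    · exact (dif_pos h).trans ((glue_wp hj₀ ℓ h₁ hcomp m _ h h0).trans hval)
    · exact (dif_neg h).trans hval

end Glue


/-- Comparison: the horn as a generalized horn. -/
def hornToGhorn (n : ℕ) (i : Fin (n + 1)) : (Λ[n, i] : SSet.{u}) ⟶ ghorn.{u} n (Finset.univ.erase i) where
  app m := TypeCat.ofHom fun α => ⟨α.1, by
    obtain ⟨j, hj⟩ := Set.ne_univ_iff_exists_notMem _ |>.mp α.2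
    simp only [Set.mem_union, Set.mem_singleton_iff, not_or] at hj
    exact ⟨j, Finset.mem_erase.mpr ⟨hj.2, Finset.mem_univ j⟩,
      fun k hk => hj.1 ⟨k, hk⟩⟩⟩
  naturality _ _ _ := by apply ConcreteCategory.hom_ext; intro α; exact Subtype.ext rfl

/-- Comparison: the generalized horn as a horn. -/
def ghornToHorn (n : ℕ) (i : Fin (n + 1)) : ghorn.{u} n (Finset.univ.erase i) ⟶ (Λ[n, i] : SSet.{u}) where
  app m := TypeCat.ofHom fun α => ⟨α.1, by
    obtain ⟨j, hjT, hj⟩ := α.2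
    intro e
    have hju : j ∈ Set.range (stdSimplex.asOrderHom α.1) ∪ {i} := e ▸ Set.mem_univ j
    rcases hju with ⟨k, hk⟩ | hji
    · exact hj k hk
    · exact (Finset.mem_erase.mp hjT).1 hji⟩
  naturality _ _ _ := by apply ConcreteCategory.hom_ext; intro α; exact Subtype.ext rfl

lemma hornToGhorn_ghornToHorn (n : ℕ) (i : Fin (n + 1)) :
    hornToGhorn.{u} n i ≫ ghornToHorn n i = 𝟙 _ := by
  apply NatTrans.ext; funext m; apply ConcreteCategory.hom_ext; intro α; exact Subtype.ext rfl

lemma ghornToHorn_hornToGhorn (n : ℕ) (i : Fin (n + 1)) :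
    ghornToHorn.{u} n i ≫ hornToGhorn n i = 𝟙 _ := by
  apply NatTrans.ext; funext m; apply ConcreteCategory.hom_ext; intro α; exact Subtype.ext rfl

lemma hornToGhorn_ι (n : ℕ) (i : Fin (n + 1)) :
    hornToGhorn.{u} n i ≫ ghornι n (Finset.univ.erase i) = (horn n i).ι := rfl

lemma ghornToHorn_ι (n : ℕ) (i : Fin (n + 1)) :
    ghornToHorn.{u} n i ≫ (horn n i).ι = ghornι n (Finset.univ.erase i) := rfl


lemma extend_lift {X Y : SSet.{u}} (p : X ⟶ Y)
    (hsurj : ∀ m, Function.Surjective (p.app m)) (hp : IsKanFibration p) :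
    ∀ (N n : ℕ) (T : Finset (Fin (n + 1))), n + Tᶜ.card ≤ N → T ≠ Finset.univ →
      ∀ (u : ghorn n T ⟶ X) (v : Δ[n] ⟶ Y), u ≫ p = ghornι n T ≫ v →
      ∃ l : Δ[n] ⟶ X, ghornι n T ≫ l = u ∧ l ≫ p = v := by
  intro N
  induction N using Nat.strong_induction_on with
  | _ N IH =>
  intro n T hN hT u v hsq
  by_cases hTe : T = ∅
  · -- base case: empty set of faces; use surjectivity
    subst hTe
    obtain ⟨x, hx⟩ := hsurj (Opposite.op (SimplexCategory.mk n))
      (SSet.yonedaEquiv v)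
    refine ⟨SSet.yonedaEquiv.symm x, ghorn_empty_ext _ _, ?_⟩
    apply SSet.yonedaEquiv.injective
    show p.app _ (SSet.yonedaEquiv (X := X) (SSet.yonedaEquiv.symm x)) = _
    rw [Equiv.apply_symm_apply]
    exact hx
  · by_cases hT1 : ∃ k, T = Finset.univ.erase k
    · -- base case: an honest horn; use that `p` is a Kan fibration
      obtain ⟨k, rfl⟩ := hT1
      cases n with
      | zero =>
        exact absurd (Finset.eq_empty_of_forall_notMem fun a ha =>
          (Finset.mem_erase.mp ha).1 (Fin.ext (by omega))) hTe
      | succ m =>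
        have : HasLiftingProperty ((horn (m + 1) k).ι) p := hp m k
        have hsq' : CommSq (hornToGhorn (m + 1) k ≫ u) ((horn (m + 1) k).ι) p v := by
          constructor
          rw [Category.assoc, hsq, ← Category.assoc, hornToGhorn_ι]
        refine ⟨hsq'.lift, ?_, hsq'.fac_right⟩
        have h1 : ghornι (m + 1) (Finset.univ.erase k) =
            ghornToHorn (m + 1) k ≫ (horn (m + 1) k).ι := rfl
        rw [h1, Category.assoc, hsq'.fac_left, ← Category.assoc,
          ghornToHorn_hornToGhorn, Category.id_comp]
    · -- inductive step
      have hc2 : 2 ≤ Tᶜ.card := by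
        by_contra hlt
        interval_cases h : Tᶜ.card
        · exact hT ((Finset.compl_eq_empty_iff T).mp (Finset.card_eq_zero.mp h))
        · obtain ⟨k, hk⟩ := Finset.card_eq_one.mp h
          refine hT1 ⟨k, ?_⟩
          have := congrArg (·ᶜ) hk
          simpa [Finset.compl_singleton] using this
      cases n with
      | zero =>
        have := Finset.card_le_univ (Tᶜ : Finset (Fin 1))
        simp at this
        omega
      | succ m =>
        obtain ⟨j₀, hj₀c, k₂, hk₂c, hjk⟩ := Finset.one_lt_card.mp hc2
        have hj₀T : j₀ ∉ T := Finset.mem_compl.mp hj₀c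
        have hk₂T : k₂ ∉ T := Finset.mem_compl.mp hk₂c
        obtain ⟨s₂, hs₂⟩ := Fin.exists_succAbove_eq (Ne.symm hjk)
        have hs₂T' : s₂ ∉ preT T j₀ := by
          simp only [preT, Finset.mem_filter, Finset.mem_univ, true_and, hs₂]
          exact hk₂T
        have hT'univ : preT T j₀ ≠ Finset.univ := fun e => hs₂T' (e ▸ Finset.mem_univ s₂)
        -- cardinalities
        have hcard : (preT T j₀).card = T.card := by
          refine Finset.card_bij (fun s _ => j₀.succAbove s) ?_ ?_ ?_
          · intro s hs
            simpa [preT] using (Finset.mem_filter.mp hs).2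
          · intro a _ b _ h
            exact Fin.succAbove_right_injective h
          · intro t ht
            have htj : t ≠ j₀ := fun e => hj₀T (e ▸ ht)
            obtain ⟨s, hs⟩ := Fin.exists_succAbove_eq htj
            exact ⟨s, by simp [preT, hs, ht], hs⟩
        have hTcard : Tᶜ.card = m + 2 - T.card := by
          rw [Finset.card_compl, Fintype.card_fin]
        have hT'card : (preT T j₀)ᶜ.card = m + 1 - T.card := by
          rw [Finset.card_compl, Fintype.card_fin, hcard]
        have hTle : T.card ≤ m + 1 := by
          by_contra hgt
          have := Finset.card_le_univ T
          simp only [Finset.card_univ, Fintype.card_fin] at this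
          omega
        -- first recursive call : lift the new face
        have hsq1 : (gres T j₀ ≫ u) ≫ p =
            ghornι m (preT T j₀) ≫ (SSet.stdSimplex.map (SimplexCategory.δ j₀) ≫ v) := by
          rw [Category.assoc, hsq, ← Category.assoc, gres_ι, Category.assoc]
        obtain ⟨h₁, hh1, hh2⟩ := IH (N - 1) (by omega) m (preT T j₀) (by omega) hT'univ
          (gres T j₀ ≫ u) (SSet.stdSimplex.map (SimplexCategory.δ j₀) ≫ v) hsq1
        -- glue
        obtain ⟨ℓ', he1, he2⟩ := glue hj₀T u h₁ hh1.symm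
        have hsq2 : ℓ' ≫ p = ghornι (m + 1) (insert j₀ T) ≫ v := by
          apply ghorn_hom_ext
          intro j hj
          rcases Finset.mem_insert.mp hj with rfl | hjT
          · have A : gfaceHom (insert j T) j hj ≫ ℓ' = h₁ := he2
            rw [← Category.assoc, A, hh2, ← Category.assoc, gfaceHom_ι]
          · have B : gfaceHom (insert j₀ T) j hj ≫ ghornι (m + 1) (insert j₀ T) =
                gfaceHom T j hjT ≫ ghornι (m + 1) T := rfl
            have A : gfaceHom (insert j₀ T) j hj ≫ ℓ' = gfaceHom T j hjT ≫ u := by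
              rw [← gfaceHom_ghornMap (Finset.subset_insert j₀ T) j hjT,
                Category.assoc, he1]
            rw [← Category.assoc, A, Category.assoc, hsq, ← Category.assoc, ← B,
              Category.assoc]
        -- second recursive call : fill the enlarged generalized horn
        have hins : insert j₀ T ≠ Finset.univ := by
          intro e
          apply hk₂T
          have := e ▸ Finset.mem_univ k₂
          rcases Finset.mem_insert.mp this with h | h
          · exact absurd h (Ne.symm hjk)
          · exact h
        have hinscard : (insert j₀ T)ᶜ.card = m + 2 - (T.card + 1) := by
          rw [Finset.card_compl, Fintype.card_fin, Finset.card_insert_of_notMem hj₀T]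
        obtain ⟨l, hl1, hl2⟩ := IH (N - 1) (by omega) (m + 1) (insert j₀ T)
          (by omega) hins ℓ' v hsq2
        refine ⟨l, ?_, hl2⟩
        rw [← ghornMap_ι (m + 1) (Finset.subset_insert j₀ T), Category.assoc, hl1, he1]


/-- The unique map out of the empty generalized horn. -/
def ghornEmpty (n : ℕ) (W : SSet.{u}) : ghorn.{u} n ∅ ⟶ W where
  app m := TypeCat.ofHom fun α => absurd α.2 (by simp)
  naturality _ _ _ := by apply ConcreteCategory.hom_ext; intro α; exact absurd α.2 (by simp)

lemma gres_ghornMap_eq_gfaceHom {n : ℕ} {T T₂ : Finset (Fin (n + 2))} (h : T ⊆ T₂)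
    (j₀ : Fin (n + 2)) (hj₀ : j₀ ∈ T₂) :
    gres.{u} T j₀ ≫ ghornMap (n + 1) h =
      ghornι n (preT T j₀) ≫ gfaceHom T₂ j₀ hj₀ := by
  apply NatTrans.ext; funext m; apply ConcreteCategory.hom_ext; intro α; exact Subtype.ext rfl

/-- A surjective Kan fibration lifts maps out of horns. -/
lemma horn_lift {X Y : SSet.{u}} (p : X ⟶ Y)
    (hsurj : ∀ m, Function.Surjective (p.app m)) (hp : IsKanFibration p)
    (n : ℕ) (i : Fin (n + 2)) (f : (Λ[n + 1, i] : SSet.{u}) ⟶ Y) :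
    ∃ f' : (Λ[n + 1, i] : SSet.{u}) ⟶ X, f' ≫ p = f := by
  have key : ∀ (T : Finset (Fin (n + 2))) (hsub : T ⊆ Finset.univ.erase i),
      ∃ ℓ : ghorn (n + 1) T ⟶ X,
        ℓ ≫ p = ghornMap (n + 1) hsub ≫ (ghornToHorn (n + 1) i ≫ f) := by
    intro T
    induction T using Finset.induction_on with
    | empty => exact fun _ => ⟨ghornEmpty (n + 1) X, ghorn_empty_ext _ _⟩
    | @insert j₀ T hj₀T IHT =>
      intro hsub
      have hTsub : T ⊆ Finset.univ.erase i :=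
        fun x hx => hsub (Finset.mem_insert_of_mem hx)
      have hj₀mem : j₀ ∈ Finset.univ.erase i := hsub (Finset.mem_insert_self j₀ T)
      have hj₀i : j₀ ≠ i := (Finset.mem_erase.mp hj₀mem).1
      obtain ⟨ℓT, hℓT⟩ := IHT hTsub
      have hiT : i ∉ T := fun hx => (Finset.mem_erase.mp (hTsub hx)).1 rfl
      obtain ⟨sᵢ, hsᵢ⟩ := Fin.exists_succAbove_eq (Ne.symm hj₀i)
      have hproper : preT T j₀ ≠ Finset.univ := by
        intro e
        have hmem : sᵢ ∈ preT T j₀ := e ▸ Finset.mem_univ sᵢ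
        simp only [preT, Finset.mem_filter, Finset.mem_univ, true_and, hsᵢ] at hmem
        exact hiT hmem
      have hsq : (gres T j₀ ≫ ℓT) ≫ p = ghornι n (preT T j₀) ≫
          (gfaceHom (Finset.univ.erase i) j₀ hj₀mem ≫ (ghornToHorn (n + 1) i ≫ f)) := by
        rw [Category.assoc, hℓT, ← Category.assoc,
          gres_ghornMap_eq_gfaceHom hTsub j₀ hj₀mem, Category.assoc]
      obtain ⟨h₁, hh1, hh2⟩ := extend_lift p hsurj hp (n + (preT T j₀)ᶜ.card)
        n (preT T j₀) le_rfl hproper (gres T j₀ ≫ ℓT)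
        (gfaceHom (Finset.univ.erase i) j₀ hj₀mem ≫ (ghornToHorn (n + 1) i ≫ f)) hsq
      obtain ⟨ℓ', he1, he2⟩ := glue hj₀T ℓT h₁ hh1.symm
      refine ⟨ℓ', ?_⟩
      apply ghorn_hom_ext
      intro j hj
      rcases Finset.mem_insert.mp hj with rfl | hjT
      · have A : gfaceHom (insert j T) j hj ≫ ℓ' = h₁ := he2
        have B : gfaceHom (insert j T) j hj ≫ ghornMap (n + 1) hsub =
            gfaceHom (Finset.univ.erase i) j hj₀mem :=
          gfaceHom_ghornMap hsub j hj
        rw [← Category.assoc, A, hh2, ← Category.assoc, ← B]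
        simp only [Category.assoc]
      · have A : gfaceHom (insert j₀ T) j hj ≫ ℓ' = gfaceHom T j hjT ≫ ℓT := by
          rw [← gfaceHom_ghornMap (Finset.subset_insert j₀ T) j hjT,
            Category.assoc, he1]
        have B : gfaceHom (insert j₀ T) j hj ≫ ghornMap (n + 1) hsub =
            gfaceHom T j hjT ≫ ghornMap (n + 1) hTsub := by
          rw [gfaceHom_ghornMap hsub j hj, gfaceHom_ghornMap hTsub j hjT]
        rw [← Category.assoc, A, Category.assoc, hℓT, ← Category.assoc, ← B]
        simp only [Category.assoc]
  obtain ⟨ℓ, hℓ⟩ := key (Finset.univ.erase i) (le_refl _)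
  have hid : ghornMap (n + 1) (le_refl (Finset.univ.erase i)) = 𝟙 _ := by
    apply NatTrans.ext; funext m; apply ConcreteCategory.hom_ext; intro α; exact Subtype.ext rfl
  refine ⟨hornToGhorn (n + 1) i ≫ ℓ, ?_⟩
  rw [Category.assoc, hℓ, hid, Category.id_comp, ← Category.assoc,
    hornToGhorn_ghornToHorn, Category.id_comp]

end KanCancellation

theorem kanFibration_cancellation {X Y Z : SSet}
    (p : X ⟶ Y) (q : Y ⟶ Z)
    (hsurj : ∀ n : SimplexCategoryᵒᵖ, Function.Surjective (p.app n))
    (hp : IsKanFibration p) (hpq : IsKanFibration (p ≫ q)) :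
    IsKanFibration q := by
  intro n i
  constructor
  intro f g sq
  obtain ⟨f', hf'⟩ := KanCancellation.horn_lift p hsurj hp n i f
  have sq2 : CommSq f' ((horn (n + 1) i).ι) (p ≫ q) g := by
    constructor
    rw [← Category.assoc, hf', sq.w]
  haveI := hpq n i
  exact ⟨⟨⟨sq2.lift ≫ p,
    by rw [← Category.assoc, sq2.fac_left, hf'],
    by rw [Category.assoc]; exact sq2.fac_right⟩⟩⟩
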